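/- Let ρ and σ be positive semidefinite complex matrices of the same finite size and let P be an orthogonal projection (P² = P = P†) with Pσ = σP. Set P̄ = I−P and U = 2P−I (a unitary). Then PρP + P̄ρP̄ = ½(ρ + UρU†) and D(½(ρ + UρU†)‖σ) = D(PρP‖PσP) + D(P̄ρP̄‖P̄σP̄), with equality in [0,+∞]. -/

import Mathlib

open scoped ENNReal ComplexOrder Matrix

/-- `Log X`: functional calculus of the real logarithm (with `log 0 = 0`)
applied to a Hermitian (in particular, positive semidefinite) matrix `X`;
defined as `0` on non-Hermitian matrices. -/
noncomputable def matLog {n : Type*} [Fintype n] [DecidableEq n]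
    (X : Matrix n n ℂ) : Matrix n n ℂ :=
  if hX : X.IsHermitian then hX.cfc Real.log else 0

/-- Lindblad's extended quantum relative entropy `D(ρ‖σ)`, with values in `[0,+∞]`:
`D(ρ‖σ) = Tr(ρ·Log ρ) − Tr(ρ·Log σ) + Tr σ − Tr ρ` if `ran ρ ⊆ ran σ`, and `+∞` otherwise. -/
noncomputable def relEnt {n : Type*} [Fintype n] [DecidableEq n]
    (ρ σ : Matrix n n ℂ) : ℝ≥0∞ :=
  open Classical in
  if LinearMap.range ρ.mulVecLin ≤ LinearMap.range σ.mulVecLin then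
    ENNReal.ofReal ((ρ * matLog ρ).trace.re - (ρ * matLog σ).trace.re
      + σ.trace.re - ρ.trace.re)
  else ∞

namespace RelEntAux
open Matrix Polynomial
variable {n : Type*} [Fintype n] [DecidableEq n]

lemma matLog_eq {A : Matrix n n ℂ} (hA : A.IsHermitian) : matLog A = cfc Real.log A := by
  rw [matLog, dif_pos hA, hA.cfc_eq]

lemma matLog_formula {A : Matrix n n ℂ} (hA : A.IsHermitian) :
    matLog A = (hA.eigenvectorUnitary : Matrix n n ℂ)
      * diagonal ((RCLike.ofReal : ℝ → ℂ) ∘ Real.log ∘ hA.eigenvalues)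
      * star (hA.eigenvectorUnitary : Matrix n n ℂ) := by
  rw [matLog, dif_pos hA]; rfl

lemma isHermitian_matLog {A : Matrix n n ℂ} (hA : A.IsHermitian) :
    (matLog A).IsHermitian := by
  rw [matLog_formula hA]
  have hD : (diagonal ((RCLike.ofReal : ℝ → ℂ) ∘ Real.log ∘ hA.eigenvalues)).IsHermitian :=
    isHermitian_diagonal_of_self_adjoint _ (by ext i; simp [Pi.star_def, Function.comp])
  simpa [star_eq_conjTranspose] using
    isHermitian_mul_mul_conjTranspose (hA.eigenvectorUnitary : Matrix n n ℂ) hD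

lemma matLog_mul_eq_zero {M X : Matrix n n ℂ} (hM : M.IsHermitian) (hMX : M * X = 0) :
    matLog M * X = 0 := by
  set U : Matrix n n ℂ := (hM.eigenvectorUnitary : Matrix n n ℂ) with hU
  have hUU : star U * U = 1 := Matrix.mem_unitaryGroup_iff'.mp hM.eigenvectorUnitary.2
  have hsp : M = (hM.eigenvectorUnitary : Matrix n n ℂ) * diagonal ((RCLike.ofReal : ℝ → ℂ) ∘ hM.eigenvalues)
      * star (hM.eigenvectorUnitary : Matrix n n ℂ) := hM.spectral_theorem
  rw [← hU] at hsp
  have hD : diagonal ((RCLike.ofReal : ℝ → ℂ) ∘ hM.eigenvalues) * (star U * X) = 0 := by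
    have : star U * (M * X) = 0 := by rw [hMX, mul_zero]
    calc diagonal ((RCLike.ofReal : ℝ → ℂ) ∘ hM.eigenvalues) * (star U * X)
        = star U * M * X := by
          conv_rhs => rw [hsp]
          rw [← mul_assoc, ← mul_assoc, ← mul_assoc, hUU, one_mul, mul_assoc]
      _ = 0 := by rw [mul_assoc, hMX, mul_zero]
  have hD' : diagonal ((RCLike.ofReal : ℝ → ℂ) ∘ Real.log ∘ hM.eigenvalues) * (star U * X) = 0 := by
    ext i j
    have h1 := congrFun (congrFun hD i) j
    simp only [Matrix.mul_apply, Matrix.diagonal_apply, Function.comp_apply,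
      Matrix.zero_apply] at h1 ⊢
    rw [Finset.sum_eq_single i (by intro b _ hb; simp [Ne.symm hb]) (by simp)] at h1 ⊢
    simp only [eq_self_iff_true, if_true] at h1 ⊢
    rcases eq_or_ne (hM.eigenvalues i) 0 with h | h
    · simp [h, Real.log_zero]
    · rcases mul_eq_zero.mp h1 with h2 | h2
      · exact absurd (RCLike.ofReal_eq_zero.mp h2) h
      · rw [h2, mul_zero]
  rw [matLog_formula hM, ← hU, mul_assoc, mul_assoc, hD', mul_zero]

lemma mul_matLog_eq_zero {M X : Matrix n n ℂ} (hM : M.IsHermitian) (hXM : X * M = 0) :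
    X * matLog M = 0 := by
  have h1 : M * Xᴴ = 0 := by
    have := congrArg conjTranspose hXM
    rwa [conjTranspose_mul, hM.eq, conjTranspose_zero] at this
  have := congrArg conjTranspose (matLog_mul_eq_zero hM h1)
  simpa [conjTranspose_mul, (isHermitian_matLog hM).eq] using this

lemma pow_add_orth {M N : Matrix n n ℂ} (h1 : M * N = 0) (h2 : N * M = 0) :
    ∀ k, (M + N) ^ (k + 1) = M ^ (k + 1) + N ^ (k + 1) := by
  intro k
  induction k with
  | zero => simp
  | succ k ih =>
    have hMk : M ^ (k + 1) * N = 0 := by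
      induction k with
      | zero => simpa using h1
      | succ m ihm => rw [pow_succ, mul_assoc, h1, mul_zero]
    have hNk : N ^ (k + 1) * M = 0 := by
      induction k with
      | zero => simpa using h2
      | succ m ihm => rw [pow_succ, mul_assoc, h2, mul_zero]
    rw [pow_succ (M + N) (k + 1), ih, add_mul, mul_add, mul_add, hMk, hNk,
      ← pow_succ M (k + 1), ← pow_succ N (k + 1)]
    abel

lemma aeval_add_orth {M N : Matrix n n ℂ} (h1 : M * N = 0) (h2 : N * M = 0)
    (p : Polynomial ℝ) (hp : p.coeff 0 = 0) :
    (aeval (M + N) p : Matrix n n ℂ) = aeval M p + aeval N p := by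
  rw [aeval_eq_sum_range (M + N), aeval_eq_sum_range M, aeval_eq_sum_range N,
    ← Finset.sum_add_distrib]
  refine Finset.sum_congr rfl fun i _ => ?_
  cases i with
  | zero => simp [hp]
  | succ k => rw [pow_add_orth h1 h2 k, smul_add]

lemma matLog_add_orth {M N : Matrix n n ℂ} (hM : M.PosSemidef) (hN : N.PosSemidef)
    (h1 : M * N = 0) : matLog (M + N) = matLog M + matLog N := by
  have h2 : N * M = 0 := by
    have := congrArg conjTranspose h1
    rwa [conjTranspose_mul, hM.1.eq, hN.1.eq, conjTranspose_zero] at this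
  have hMN : (M + N).IsHermitian := hM.1.add hN.1
  have hfin : (spectrum ℝ M ∪ spectrum ℝ N ∪ spectrum ℝ (M + N) ∪ {(0 : ℝ)}).Finite :=
    ((Matrix.finite_real_spectrum.union Matrix.finite_real_spectrum).union
      Matrix.finite_real_spectrum).union (Set.finite_singleton 0)
  set s := hfin.toFinset with hs
  set p := Lagrange.interpolate s id Real.log with hp
  have hnode : ∀ x ∈ s, p.eval x = Real.log x := fun x hx => by
    simpa [hp] using Lagrange.eval_interpolate_at_node Real.log (Set.injOn_id _) hx
  have hp0 : p.coeff 0 = 0 := by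
    rw [coeff_zero_eq_eval_zero, hnode 0 (hfin.mem_toFinset.mpr (by simp)), Real.log_zero]
  have key : ∀ (A : Matrix n n ℂ), A.IsHermitian → spectrum ℝ A ⊆
      (spectrum ℝ M ∪ spectrum ℝ N ∪ spectrum ℝ (M + N) ∪ {(0 : ℝ)}) →
      matLog A = aeval A p := by
    intro A hA hspec
    have hsa : IsSelfAdjoint A := hA
    rw [matLog_eq hA, ← cfc_polynomial p A hsa]
    exact cfc_congr fun x hx => (hnode x (hfin.mem_toFinset.mpr (hspec hx))).symm
  rw [key M hM.1 (fun x hx => by simp [hx]), key N hN.1 (fun x hx => by simp [hx]),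
    key _ hMN (fun x hx => by simp [hx]), aeval_add_orth h1 h2 p hp0]

lemma klein_scalar {a s w : ℝ} (ha : 0 ≤ a) (hs : 0 ≤ s) (hw : 0 ≤ w)
    (h : s = 0 → a ≠ 0 → w = 0) :
    0 ≤ w * (a * Real.log a - a * Real.log s + s - a) := by
  rcases eq_or_lt_of_le ha with ha0 | ha0
  · rw [← ha0]; simpa using mul_nonneg hw hs
  rcases eq_or_lt_of_le hs with hs0 | hs0
  · rw [h hs0.symm (ne_of_gt ha0), zero_mul]
  · apply mul_nonneg hw
    have hlog : Real.log (s / a) ≤ s / a - 1 := Real.log_le_sub_one_of_pos (div_pos hs0 ha0)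
    rw [Real.log_div (ne_of_gt hs0) (ne_of_gt ha0)] at hlog
    have h2 := mul_le_mul_of_nonneg_left hlog (le_of_lt ha0)
    have ha' : a * (s / a - 1) = s - a := by field_simp
    rw [ha', mul_sub] at h2
    linarith

lemma trace_unitary_conj (U X : Matrix n n ℂ) (hU : star U * U = 1) :
    (U * X * star U).trace = X.trace := by
  rw [Matrix.trace_mul_cycle, hU, one_mul]

lemma conj_mul_conj (U A B : Matrix n n ℂ) (hUU : star U * U = 1) :
    (U * A * star U) * (U * B * star U) = U * (A * B) * star U := by
  have h : star U * (U * (B * star U)) = B * star U := by rw [← mul_assoc, hUU, one_mul]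
  simp only [mul_assoc, h]

lemma trace_dwdw (a b : n → ℝ) (W : Matrix n n ℂ) :
    (diagonal ((RCLike.ofReal : ℝ → ℂ) ∘ a) * W
        * (diagonal ((RCLike.ofReal : ℝ → ℂ) ∘ b) * Wᴴ)).trace
      = ((∑ i, ∑ j, a i * b j * Complex.normSq (W i j) : ℝ) : ℂ) := by
  rw [Matrix.trace]
  push_cast
  refine Finset.sum_congr rfl fun i _ => ?_
  rw [Matrix.diag_apply, Matrix.mul_apply]
  refine Finset.sum_congr rfl fun j _ => ?_
  rw [Matrix.diagonal_mul, Matrix.diagonal_mul, Matrix.conjTranspose_apply]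
  rw [← Complex.mul_conj]
  simp [Complex.star_def, Function.comp]
  ring

lemma trace_dd (a b : n → ℝ) :
    (diagonal ((RCLike.ofReal : ℝ → ℂ) ∘ a) * diagonal ((RCLike.ofReal : ℝ → ℂ) ∘ b)).trace
      = ((∑ i, a i * b i : ℝ) : ℂ) := by
  rw [Matrix.diagonal_mul_diagonal, Matrix.trace_diagonal]
  push_cast
  rfl

lemma klein {M S : Matrix n n ℂ} (hM : M.PosSemidef) (hS : S.PosSemidef)
    (hker : ∀ v, S *ᵥ v = 0 → M *ᵥ v = 0) :
    0 ≤ (M * matLog M).trace.re - (M * matLog S).trace.re + S.trace.re - M.trace.re := by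
  set a : n → ℝ := hM.1.eigenvalues with ha
  set b : n → ℝ := hS.1.eigenvalues with hb
  set U : Matrix n n ℂ := (hM.1.eigenvectorUnitary : Matrix n n ℂ) with hUdef
  set V : Matrix n n ℂ := (hS.1.eigenvectorUnitary : Matrix n n ℂ) with hVdef
  have hUU : star U * U = 1 := Matrix.mem_unitaryGroup_iff'.mp hM.1.eigenvectorUnitary.2
  have hUU' : U * star U = 1 := Matrix.mem_unitaryGroup_iff.mp hM.1.eigenvectorUnitary.2
  have hVV : star V * V = 1 := Matrix.mem_unitaryGroup_iff'.mp hS.1.eigenvectorUnitary.2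
  have hVV' : V * star V = 1 := Matrix.mem_unitaryGroup_iff.mp hS.1.eigenvectorUnitary.2
  set W : Matrix n n ℂ := star U * V with hWdef
  set w : n → n → ℝ := fun i j => Complex.normSq (W i j) with hw
  set Da : Matrix n n ℂ := diagonal ((RCLike.ofReal : ℝ → ℂ) ∘ a) with hDa
  set Dla : Matrix n n ℂ := diagonal ((RCLike.ofReal : ℝ → ℂ) ∘ Real.log ∘ a) with hDla
  set Db : Matrix n n ℂ := diagonal ((RCLike.ofReal : ℝ → ℂ) ∘ b) with hDb
  set Dlb : Matrix n n ℂ := diagonal ((RCLike.ofReal : ℝ → ℂ) ∘ Real.log ∘ b) with hDlb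
  have hMsp : M = U * Da * star U := hM.1.spectral_theorem
  have hSsp : S = V * Db * star V := hS.1.spectral_theorem
  have hWstar : star W = star V * U := by rw [hWdef, StarMul.star_mul, star_star]
  have hWW' : W * Wᴴ = 1 := by
    rw [← star_eq_conjTranspose, hWstar, hWdef, mul_assoc, ← mul_assoc V, hVV', one_mul, hUU]
  have hWW : Wᴴ * W = 1 := by
    rw [← star_eq_conjTranspose, hWstar, hWdef, mul_assoc, ← mul_assoc U, hUU', one_mul, hVV]
  have hT1 : (M * matLog M).trace = ((∑ i, a i * Real.log (a i) : ℝ) : ℂ) := by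
    rw [matLog_formula hM.1, ← hUdef, ← hDla]
    have : M * (U * Dla * star U) = U * (Da * Dla) * star U := by
      rw [hMsp, conj_mul_conj _ _ _ hUU]
    rw [this, trace_unitary_conj _ _ hUU, trace_dd]
    norm_cast
  have hTM : M.trace = ((∑ i, a i : ℝ) : ℂ) := by
    rw [hMsp, trace_unitary_conj _ _ hUU, hDa]
    rw [Matrix.trace_diagonal]
    push_cast; rfl
  have hTS : S.trace = ((∑ j, b j : ℝ) : ℂ) := by
    rw [hSsp, trace_unitary_conj _ _ hVV, hDb]
    rw [Matrix.trace_diagonal]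
    push_cast; rfl
  have hT2 : (M * matLog S).trace
      = ((∑ i, ∑ j, a i * Real.log (b j) * w i j : ℝ) : ℂ) := by
    rw [matLog_formula hS.1, ← hVdef, ← hDlb]
    have : M * (V * Dlb * star V) = U * (Da * W * (Dlb * Wᴴ)) * star U := by
      rw [hMsp, ← star_eq_conjTranspose, hWstar, hWdef]
      simp only [mul_assoc]
      rw [hUU', mul_one]
    rw [this, trace_unitary_conj _ _ hUU, trace_dwdw]
    norm_cast
  have hrow : ∀ i, ∑ j, w i j = 1 := by
    intro i
    have h1 := congrFun (congrFun hWW' i) i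
    rw [Matrix.mul_apply, Matrix.one_apply_eq] at h1
    have : ∀ j, W i j * Wᴴ j i = ((w i j : ℝ) : ℂ) := fun j => by
      rw [Matrix.conjTranspose_apply, ← Complex.mul_conj]; rfl
    rw [Finset.sum_congr rfl (fun j _ => this j)] at h1
    exact_mod_cast h1
  have hcol : ∀ j, ∑ i, w i j = 1 := by
    intro j
    have h1 := congrFun (congrFun hWW j) j
    rw [Matrix.mul_apply, Matrix.one_apply_eq] at h1
    have : ∀ i, Wᴴ j i * W i j = ((w i j : ℝ) : ℂ) := fun i => by
      rw [Matrix.conjTranspose_apply, ← Complex.mul_conj]; exact mul_comm _ _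
    rw [Finset.sum_congr rfl (fun i _ => this i)] at h1
    exact_mod_cast h1
  have hzero : ∀ i j, b j = 0 → a i ≠ 0 → w i j = 0 := by
    intro i j hbj hai
    have hSV : S * V = V * Db := by
      rw [hSsp, mul_assoc, mul_assoc, hVV, mul_one]
    have hMV : M * V = U * (Da * W) := by
      rw [hMsp, hWdef]
      simp only [mul_assoc]
    have hv : S *ᵥ (fun k => V k j) = 0 := by
      funext i'
      have : (S *ᵥ fun k => V k j) i' = (S * V) i' j := by
        rw [Matrix.mul_apply, Matrix.mulVec]; rfl
      rw [this, hSV, Matrix.mul_diagonal]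
      simp [hbj]
    have hm := hker _ hv
    have hMVij : ∀ i', (M * V) i' j = 0 := by
      intro i'
      have : (M * V) i' j = (M *ᵥ fun k => V k j) i' := by
        rw [Matrix.mul_apply, Matrix.mulVec]; rfl
      rw [this, hm]; rfl
    have hDW : (Da * W) i j = 0 := by
      have h5 : Da * W = star U * (M * V) := by
        rw [hMV, ← mul_assoc (star U) U (Da * W), hUU, one_mul]
      rw [h5, Matrix.mul_apply]
      exact Finset.sum_eq_zero fun k _ => by rw [hMVij k, mul_zero]
    rw [Matrix.diagonal_mul] at hDW
    rcases mul_eq_zero.mp hDW with h6 | h6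
    · exact absurd (RCLike.ofReal_eq_zero.mp h6) hai
    · rw [hw]; simp [h6]
  have hre1 : (M * matLog M).trace.re = ∑ i, a i * Real.log (a i) := by
    rw [hT1, Complex.ofReal_re]
  have hre2 : (M * matLog S).trace.re = ∑ i, ∑ j, a i * Real.log (b j) * w i j := by
    rw [hT2, Complex.ofReal_re]
  have hreM : M.trace.re = ∑ i, a i := by rw [hTM, Complex.ofReal_re]
  have hreS : S.trace.re = ∑ j, b j := by rw [hTS, Complex.ofReal_re]
  rw [hre1, hre2, hreM, hreS]
  have e1 : ∑ i, a i * Real.log (a i) = ∑ i, ∑ j, a i * Real.log (a i) * w i j := by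
    refine Finset.sum_congr rfl fun i _ => ?_
    rw [← Finset.mul_sum, hrow i, mul_one]
  have e3 : ∑ j, b j = ∑ i, ∑ j, b j * w i j := by
    rw [Finset.sum_comm]
    refine Finset.sum_congr rfl fun j _ => ?_
    rw [← Finset.mul_sum, hcol j, mul_one]
  have e4 : ∑ i, a i = ∑ i, ∑ j, a i * w i j := by
    refine Finset.sum_congr rfl fun i _ => ?_
    rw [← Finset.mul_sum, hrow i, mul_one]
  rw [e1, e3, e4]
  have key : ∑ i, ∑ j, (a i * Real.log (a i) - a i * Real.log (b j) + b j - a i) * w i j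
      = ∑ i, ∑ j, a i * Real.log (a i) * w i j
        - ∑ i, ∑ j, a i * Real.log (b j) * w i j
        + ∑ i, ∑ j, b j * w i j - ∑ i, ∑ j, a i * w i j := by
    simp only [sub_mul, add_mul, Finset.sum_sub_distrib, Finset.sum_add_distrib]
  rw [← key]
  refine Finset.sum_nonneg fun i _ => Finset.sum_nonneg fun j _ => ?_
  rw [mul_comm]
  exact klein_scalar (hM.eigenvalues_nonneg i) (hS.eigenvalues_nonneg j)
    (Complex.normSq_nonneg _) (fun h1 h2 => hzero i j h1 h2)

lemma mulVec_eq_zero_of_range {A B : Matrix n n ℂ} (hA : A.PosSemidef) (hB : B.IsHermitian)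
    (hr : LinearMap.range A.mulVecLin ≤ LinearMap.range B.mulVecLin) :
    ∀ v, B *ᵥ v = 0 → A *ᵥ v = 0 := by
  intro v hv
  obtain ⟨w, hw⟩ := hr (LinearMap.mem_range.mpr ⟨v, rfl⟩)
  simp only [Matrix.mulVecLin_apply] at hw
  have hdot : star v ⬝ᵥ (A *ᵥ v) = 0 := by
    rw [← hw, Matrix.dotProduct_mulVec, ← hB.eq, ← Matrix.star_mulVec, hv]
    simp
  obtain ⟨C, hC⟩ : ∃ C : Matrix n n ℂ, A = Cᴴ * C := by
    open MatrixOrder in exact CStarAlgebra.nonneg_iff_eq_star_mul_self.mp hA.nonneg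
  have hCv : C *ᵥ v = 0 := by
    rw [hC, ← Matrix.mulVec_mulVec, Matrix.dotProduct_mulVec, ← Matrix.star_mulVec] at hdot
    exact dotProduct_star_self_eq_zero.mp hdot
  rw [hC, ← Matrix.mulVec_mulVec, hCv, Matrix.mulVec_zero]

lemma relEnt_of_le {ρ σ : Matrix n n ℂ}
    (h : LinearMap.range ρ.mulVecLin ≤ LinearMap.range σ.mulVecLin) :
    relEnt ρ σ = ENNReal.ofReal ((ρ * matLog ρ).trace.re - (ρ * matLog σ).trace.re
      + σ.trace.re - ρ.trace.re) := by
  rw [relEnt, if_pos h]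

lemma relEnt_of_not {ρ σ : Matrix n n ℂ}
    (h : ¬ LinearMap.range ρ.mulVecLin ≤ LinearMap.range σ.mulVecLin) :
    relEnt ρ σ = ∞ := by
  rw [relEnt, if_neg h]

end RelEntAux

open Matrix RelEntAux in
theorem relEnt_pinching {n : Type*} [Fintype n] [DecidableEq n]
    (ρ σ P : Matrix n n ℂ) (hρ : ρ.PosSemidef) (hσ : σ.PosSemidef)
    (hP2 : P * P = P) (hPadj : Pᴴ = P) (hPσ : P * σ = σ * P) :
    P * ρ * P + (1 - P) * ρ * (1 - P)
        = (2⁻¹ : ℂ) • (ρ + (2 • P - 1) * ρ * (2 • P - 1)ᴴ) ∧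
      relEnt ((2⁻¹ : ℂ) • (ρ + (2 • P - 1) * ρ * (2 • P - 1)ᴴ)) σ
        = relEnt (P * ρ * P) (P * σ * P)
          + relEnt ((1 - P) * ρ * (1 - P)) ((1 - P) * σ * (1 - P)) := by
  set Q : Matrix n n ℂ := 1 - P with hQdef
  have hQσ : Q * σ = σ * Q := by
    simp only [hQdef, sub_mul, mul_sub, one_mul, mul_one, hPσ]
  have hPQ : P * Q = 0 := by
    simp only [hQdef, mul_sub, mul_one, hP2, sub_self]
  have hQP : Q * P = 0 := by
    simp only [hQdef, sub_mul, one_mul, hP2, sub_self]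
  have hQadj : Qᴴ = Q := by
    simp [hQdef, conjTranspose_sub, hPadj]
  have hhalf : ∀ X : Matrix n n ℂ, (2⁻¹ : ℂ) • (X + X) = X := by
    intro X
    rw [← two_smul ℂ X, smul_smul]
    norm_num
  have h2P : (2 • P : Matrix n n ℂ) = P + P := two_smul ℕ P
  have hUadj : ((2 • P - 1 : Matrix n n ℂ))ᴴ = 2 • P - 1 := by
    rw [h2P, conjTranspose_sub, conjTranspose_add, hPadj, conjTranspose_one]
  have hexp : ρ + (2 • P - 1) * ρ * (2 • P - 1)ᴴ
      = (P * ρ * P + Q * ρ * Q) + (P * ρ * P + Q * ρ * Q) := by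
    rw [hUadj, h2P, hQdef]
    noncomm_ring
  have hfirst : P * ρ * P + Q * ρ * Q
      = (2⁻¹ : ℂ) • (ρ + (2 • P - 1) * ρ * (2 • P - 1)ᴴ) := by
    rw [hexp, hhalf]
  refine ⟨hfirst, ?_⟩
  rw [← hfirst]
  set A : Matrix n n ℂ := P * ρ * P with hAdef
  set B : Matrix n n ℂ := Q * ρ * Q with hBdef
  set SA : Matrix n n ℂ := P * σ * P with hSAdef
  set SB : Matrix n n ℂ := Q * σ * Q with hSBdef
  have hA : A.PosSemidef := by
    have := hρ.mul_mul_conjTranspose_same P; rwa [hPadj] at this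
  have hB : B.PosSemidef := by
    have := hρ.mul_mul_conjTranspose_same Q; rwa [hQadj] at this
  have hSA : SA.PosSemidef := by
    have := hσ.mul_mul_conjTranspose_same P; rwa [hPadj] at this
  have hSB : SB.PosSemidef := by
    have := hσ.mul_mul_conjTranspose_same Q; rwa [hQadj] at this
  have hABz : A * B = 0 := by
    rw [hAdef, hBdef]; simp only [← mul_assoc]
    rw [mul_assoc (P * ρ) P Q, hPQ, mul_zero, zero_mul, zero_mul]
  have hBAz : B * A = 0 := by
    rw [hAdef, hBdef]; simp only [← mul_assoc]
    rw [mul_assoc (Q * ρ) Q P, hQP, mul_zero, zero_mul, zero_mul]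
  have hSASBz : SA * SB = 0 := by
    rw [hSAdef, hSBdef]; simp only [← mul_assoc]
    rw [mul_assoc (P * σ) P Q, hPQ, mul_zero, zero_mul, zero_mul]
  have hASBz : A * SB = 0 := by
    rw [hAdef, hSBdef]; simp only [← mul_assoc]
    rw [mul_assoc (P * ρ) P Q, hPQ, mul_zero, zero_mul, zero_mul]
  have hBSAz : B * SA = 0 := by
    rw [hBdef, hSAdef]; simp only [← mul_assoc]
    rw [mul_assoc (Q * ρ) Q P, hQP, mul_zero, zero_mul, zero_mul]
  have hSAr : SA = σ * P := by rw [hSAdef, hPσ, mul_assoc, hP2]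
  have hSAl : SA = P * σ := by rw [hSAr, ← hPσ]
  have hSBr : SB = σ * Q := by
    rw [hSBdef, hQσ, mul_assoc]
    have : Q * Q = Q := by
      simp only [hQdef, mul_sub, sub_mul, mul_one, one_mul, hP2]
      abel
    rw [this]
  have hSBl : SB = Q * σ := by rw [hSBr, ← hQσ]
  have hσsum : σ = SA + SB := by
    rw [hSAr, hSBr, ← mul_add, hQdef]
    simp
  have hlogρ' : matLog (A + B) = matLog A + matLog B := matLog_add_orth hA hB hABz
  have hlogσ : matLog σ = matLog SA + matLog SB := by
    have h := matLog_add_orth hSA hSB hSASBz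
    rwa [← hσsum] at h
  have hAlB : A * matLog B = 0 := mul_matLog_eq_zero hB.1 hABz
  have hBlA : B * matLog A = 0 := mul_matLog_eq_zero hA.1 hBAz
  have hAlSB : A * matLog SB = 0 := mul_matLog_eq_zero hSB.1 hASBz
  have hBlSA : B * matLog SA = 0 := mul_matLog_eq_zero hSA.1 hBSAz
  have t1 : ((A + B) * matLog (A + B)).trace
      = (A * matLog A).trace + (B * matLog B).trace := by
    rw [hlogρ', add_mul, mul_add, mul_add, hAlB, hBlA, add_zero, zero_add, trace_add]
  have t2 : ((A + B) * matLog σ).trace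
      = (A * matLog SA).trace + (B * matLog SB).trace := by
    rw [hlogσ, add_mul, mul_add, mul_add, hAlSB, hBlSA, add_zero, zero_add, trace_add]
  have hPA : P * A = A := by rw [hAdef]; simp only [← mul_assoc]; rw [hP2]
  have hPB : P * B = 0 := by
    rw [hBdef]; simp only [← mul_assoc]; rw [hPQ, zero_mul, zero_mul]
  have hQA : Q * A = 0 := by
    rw [hAdef]; simp only [← mul_assoc]; rw [hQP, zero_mul, zero_mul]
  have hQB : Q * B = B := by
    rw [hBdef]; simp only [← mul_assoc]
    have : Q * Q = Q := by
      simp only [hQdef, mul_sub, sub_mul, mul_one, one_mul, hP2]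
      abel
    rw [this]
  have hPsum : P * (A + B) = A := by rw [mul_add, hPA, hPB, add_zero]
  have hQsum : Q * (A + B) = B := by rw [mul_add, hQA, hQB, zero_add]
  have hranSA : LinearMap.range SA.mulVecLin ≤ LinearMap.range σ.mulVecLin := by
    rw [hSAr, Matrix.mulVecLin_mul]
    intro x hx
    obtain ⟨v, rfl⟩ := hx
    exact ⟨P.mulVecLin v, rfl⟩
  have hranSB : LinearMap.range SB.mulVecLin ≤ LinearMap.range σ.mulVecLin := by
    rw [hSBr, Matrix.mulVecLin_mul]
    intro x hx
    obtain ⟨v, rfl⟩ := hx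
    exact ⟨Q.mulVecLin v, rfl⟩
  have hfwd : LinearMap.range (A + B).mulVecLin ≤ LinearMap.range σ.mulVecLin →
      LinearMap.range A.mulVecLin ≤ LinearMap.range SA.mulVecLin ∧
        LinearMap.range B.mulVecLin ≤ LinearMap.range SB.mulVecLin := by
    intro h
    constructor
    · have e : Submodule.map P.mulVecLin (LinearMap.range (A + B).mulVecLin)
          = LinearMap.range A.mulVecLin := by
        rw [← LinearMap.range_comp, ← Matrix.mulVecLin_mul, hPsum]
      have e2 : Submodule.map P.mulVecLin (LinearMap.range σ.mulVecLin)
          = LinearMap.range SA.mulVecLin := by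
        rw [← LinearMap.range_comp, ← Matrix.mulVecLin_mul, ← hSAl]
      rw [← e, ← e2]
      exact Submodule.map_mono h
    · have e : Submodule.map Q.mulVecLin (LinearMap.range (A + B).mulVecLin)
          = LinearMap.range B.mulVecLin := by
        rw [← LinearMap.range_comp, ← Matrix.mulVecLin_mul, hQsum]
      have e2 : Submodule.map Q.mulVecLin (LinearMap.range σ.mulVecLin)
          = LinearMap.range SB.mulVecLin := by
        rw [← LinearMap.range_comp, ← Matrix.mulVecLin_mul, ← hSBl]
      rw [← e, ← e2]
      exact Submodule.map_mono h
  have hbwd : LinearMap.range A.mulVecLin ≤ LinearMap.range SA.mulVecLin ∧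
      LinearMap.range B.mulVecLin ≤ LinearMap.range SB.mulVecLin →
      LinearMap.range (A + B).mulVecLin ≤ LinearMap.range σ.mulVecLin := by
    rintro ⟨h1, h2⟩ x hx
    obtain ⟨v, rfl⟩ := hx
    have e : (A + B).mulVecLin v = A.mulVecLin v + B.mulVecLin v := by
      rw [Matrix.mulVecLin_add]; rfl
    rw [e]
    exact Submodule.add_mem _ (hranSA (h1 ⟨v, rfl⟩)) (hranSB (h2 ⟨v, rfl⟩))
  by_cases hc : LinearMap.range (A + B).mulVecLin ≤ LinearMap.range σ.mulVecLin
  · obtain ⟨h1, h2⟩ := hfwd hc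
    have k1 := klein hA hSA (fun v hv => by
      have := mulVec_eq_zero_of_range hA hSA.1 h1 v hv
      exact this)
    have k2 := klein hB hSB (fun v hv => by
      have := mulVec_eq_zero_of_range hB hSB.1 h2 v hv
      exact this)
    rw [relEnt_of_le hc, relEnt_of_le h1, relEnt_of_le h2, ← ENNReal.ofReal_add k1 k2]
    congr 1
    have tr3 : σ.trace.re = SA.trace.re + SB.trace.re := by
      rw [hσsum, trace_add, Complex.add_re]
    have tr4 : (A + B).trace.re = A.trace.re + B.trace.re := by
      rw [trace_add, Complex.add_re]
    rw [t1, t2, Complex.add_re, Complex.add_re, tr3, tr4]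
    ring
  · rw [relEnt_of_not hc]
    have hnand : ¬ (LinearMap.range A.mulVecLin ≤ LinearMap.range SA.mulVecLin ∧
        LinearMap.range B.mulVecLin ≤ LinearMap.range SB.mulVecLin) :=
      fun hand => hc (hbwd hand)
    rcases not_and_or.mp hnand with h1 | h2
    · rw [relEnt_of_not h1]
      simp
    · rw [relEnt_of_not h2]
      simp
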